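/- For all positive integers m, n and all real x, y, the squared norm of ∂φ_{m,n}/∂x in ℂ³ ≅ ℝ⁶ equals (m+n)·((m+n) − (m−n)cos 2x) / (m² + 4mn + n² − (m² − n²)cos 2x). -/

import Mathlib

open Real Complex

/-- The doubly periodic immersion `φ_{m,n} : ℝ² → ℂ³` of Karpukhin's family of
minimal tori of revolution in `S⁵ ⊂ ℂ³`. -/
noncomputable def phiMN (m n : ℕ) (x y : ℝ) : Fin 3 → ℂ :=
  ![(Real.sqrt (((m : ℝ) + n) / (2 * m + n)) : ℂ) * Complex.exp (Complex.I * m * y) *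
      (Real.sin x : ℂ),
    (Real.sqrt (((m : ℝ) + n) / (m + 2 * n)) : ℂ) * Complex.exp (Complex.I * n * y) *
      (Real.cos x : ℂ),
    (Real.sqrt ((n : ℝ) * Real.cos x ^ 2 / (m + 2 * n) +
        (m : ℝ) * Real.sin x ^ 2 / (2 * m + n)) : ℂ) *
      Complex.exp (-(Complex.I * ((m : ℝ) + n) * y))]

set_option maxHeartbeats 2000000 in
/-- The squared norm of `∂φ_{m,n}/∂x` in `ℂ³ ≅ ℝ⁶` equals
`(m+n)·((m+n) − (m−n)cos 2x) / (m² + 4mn + n² − (m² − n²)cos 2x)`. -/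
theorem phiMN_partial_x_sq_norm (m n : ℕ) (hm : 0 < m) (hn : 0 < n) (x y : ℝ) :
    ∑ j : Fin 3, ‖deriv (fun t : ℝ => phiMN m n t y j) x‖ ^ 2 =
      ((m : ℝ) + n) * (((m : ℝ) + n) - ((m : ℝ) - n) * Real.cos (2 * x)) /
        ((m : ℝ) ^ 2 + 4 * m * n + n ^ 2 - ((m : ℝ) ^ 2 - n ^ 2) * Real.cos (2 * x)) := by
  have hm1 : (1:ℝ) ≤ m := by exact_mod_cast hm
  have hn1 : (1:ℝ) ≤ n := by exact_mod_cast hn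
  set c := Real.cos x with hc
  set s := Real.sin x with hs
  have hsc : s ^ 2 + c ^ 2 = 1 := Real.sin_sq_add_cos_sq x
  have hD1 : (0:ℝ) < 2 * m + n := by linarith
  have hD2 : (0:ℝ) < (m:ℝ) + 2 * n := by linarith
  -- the inside of the sqrt in the third component
  set G : ℝ → ℝ := fun t => (n : ℝ) * Real.cos t ^ 2 / (m + 2 * n) +
      (m : ℝ) * Real.sin t ^ 2 / (2 * m + n) with hG
  have hGx : G x = ((n:ℝ) * c ^ 2 * (2 * m + n) + (m:ℝ) * s ^ 2 * (m + 2 * n)) /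
      (((m:ℝ) + 2 * n) * (2 * m + n)) := by
    rw [hG]; field_simp
    rw [hc, hs]; ring
  have hnum : (0:ℝ) < (n:ℝ) * c ^ 2 * (2 * m + n) + (m:ℝ) * s ^ 2 * (m + 2 * n) := by
    nlinarith [sq_nonneg s, sq_nonneg c, mul_nonneg (sub_nonneg.2 hn1) (sq_nonneg c),
      mul_nonneg (sub_nonneg.2 hm1) (sq_nonneg s)]
  have hGpos : 0 < G x := by rw [hGx]; positivity
  -- derivative of G
  have hG' : HasDerivAt G
      ((n : ℝ) * (2 * c * -s) / (m + 2 * n) + (m : ℝ) * (2 * s * c) / (2 * m + n)) x := by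
    have h1 : HasDerivAt (fun t : ℝ => Real.cos t ^ 2) (2 * c ^ 1 * -s) x := by
      simpa [hc, hs] using (Real.hasDerivAt_cos x).fun_pow 2
    have h2 : HasDerivAt (fun t : ℝ => Real.sin t ^ 2) (2 * s ^ 1 * c) x := by
      simpa [hc, hs] using (Real.hasDerivAt_sin x).fun_pow 2
    have := (((h1.const_mul (n:ℝ)).div_const ((m:ℝ) + 2*n)).add
      ((h2.const_mul (m:ℝ)).div_const (2*(m:ℝ) + n)))
    convert this using 1 <;> first | rfl | ring
  -- derivatives of the three components
  have hd0 : HasDerivAt (fun t : ℝ => phiMN m n t y 0)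
      ((Real.sqrt (((m : ℝ) + n) / (2 * m + n)) : ℂ) * Complex.exp (Complex.I * m * y) *
        (c : ℂ)) x := by
    have h := ((Real.hasDerivAt_sin x).ofReal_comp).const_mul
      ((Real.sqrt (((m : ℝ) + n) / (2 * m + n)) : ℂ) * Complex.exp (Complex.I * m * y))
    convert h using 2 <;> first | rfl | simp [phiMN, mul_assoc]
  have hd1 : HasDerivAt (fun t : ℝ => phiMN m n t y 1)
      ((Real.sqrt (((m : ℝ) + n) / (m + 2 * n)) : ℂ) * Complex.exp (Complex.I * n * y) *
        ((-s : ℝ) : ℂ)) x := by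
    have h := ((Real.hasDerivAt_cos x).ofReal_comp).const_mul
      ((Real.sqrt (((m : ℝ) + n) / (m + 2 * n)) : ℂ) * Complex.exp (Complex.I * n * y))
    convert h using 2 <;> first | rfl | simp [phiMN, mul_assoc]
  set G' : ℝ := (n : ℝ) * (2 * c * -s) / (m + 2 * n) + (m : ℝ) * (2 * s * c) / (2 * m + n)
    with hG'def
  have hd2 : HasDerivAt (fun t : ℝ => phiMN m n t y 2)
      (((G' / (2 * Real.sqrt (G x)) : ℝ) : ℂ) * Complex.exp (-(Complex.I * ((m : ℝ) + n) * y)))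
      x := by
    have h := (((hG'.sqrt hGpos.ne').ofReal_comp).mul_const
      (Complex.exp (-(Complex.I * ((m : ℝ) + n) * y))))
    convert h using 2 <;> first | rfl | simp [phiMN, hG]
  rw [Fin.sum_univ_three, hd0.deriv, hd1.deriv, hd2.deriv]
  have habs1 : ‖Complex.exp (Complex.I * m * y)‖ = 1 := by
    rw [Complex.norm_exp]; simp
  have habs2 : ‖Complex.exp (Complex.I * n * y)‖ = 1 := by
    rw [Complex.norm_exp]; simp
  have habs3 : ‖Complex.exp (-(Complex.I * ((m : ℝ) + n) * y))‖ = 1 := by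
    rw [Complex.norm_exp]; simp
  rw [norm_mul, norm_mul, norm_mul, norm_mul, norm_mul, habs1, habs2, habs3,
    Complex.norm_real, Complex.norm_real, Complex.norm_real, Complex.norm_real,
    Complex.norm_real]
  have hr1 : (0:ℝ) ≤ ((m : ℝ) + n) / (2 * m + n) := by positivity
  have hr2 : (0:ℝ) ≤ ((m : ℝ) + n) / (m + 2 * n) := by positivity
  have hsq1 : Real.sqrt (((m : ℝ) + n) / (2 * m + n)) ^ 2 = ((m : ℝ) + n) / (2 * m + n) :=
    Real.sq_sqrt hr1
  have hsq2 : Real.sqrt (((m : ℝ) + n) / (m + 2 * n)) ^ 2 = ((m : ℝ) + n) / (m + 2 * n) :=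
    Real.sq_sqrt hr2
  have key : (G' / (2 * Real.sqrt (G x))) ^ 2 = G' ^ 2 / (4 * G x) := by
    rw [div_pow, mul_pow, Real.sq_sqrt hGpos.le]
    norm_num
  rw [mul_pow, mul_pow, mul_pow, mul_pow, mul_pow]
  simp only [Real.norm_eq_abs, _root_.sq_abs, one_pow, mul_one, neg_sq]
  rw [hsq1, hsq2, key]
  -- now pure real algebra
  rw [Real.cos_two_mul]
  have hs2 : s ^ 2 = 1 - c ^ 2 := by linarith
  have hGval : G x = ((m:ℝ)^2 + 2*m*n - ((m:ℝ)^2 - n^2) * c^2) / (((m:ℝ)+2*n)*(2*m+n)) := by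
    rw [hGx]; rw [hs2]; ring_nf
  have hG'sq : G' ^ 2 = 4 * s^2 * c^2 * ((m:ℝ)^2 - n^2)^2 / (((m:ℝ)+2*n)*(2*m+n))^2 := by
    rw [hG'def]; field_simp; ring
  rw [hG'sq, hGval, hs2]
  have hden : (0:ℝ) < (m:ℝ)^2 + 2*m*n - ((m:ℝ)^2 - n^2) * c^2 := by
    nlinarith [sq_nonneg c, sq_nonneg s]
  have hL : ((m:ℝ) + n) / (2 * m + n) * c ^ 2 + ((m:ℝ) + n) / (m + 2 * n) * (1 - c ^ 2) +
      4 * (1 - c ^ 2) * c ^ 2 * ((m:ℝ)^2 - n^2)^2 / (((m:ℝ)+2*n)*(2*m+n))^2 /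
        (4 * (((m:ℝ)^2 + 2*m*n - ((m:ℝ)^2 - n^2) * c^2) / (((m:ℝ)+2*n)*(2*m+n)))) =
      ((m:ℝ) + n) * ((m:ℝ) - ((m:ℝ) - n) * c ^ 2) /
        ((m:ℝ)^2 + 2*m*n - ((m:ℝ)^2 - n^2) * c^2) := by
    rw [eq_div_iff hden.ne']
    field_simp
    rw [mul_add, mul_div_cancel₀ _ (by intro h; apply hden.ne'; linear_combination h)]
    ring
  rw [hL]
  rw [show (m:ℝ) ^ 2 + 4 * m * n + n ^ 2 - ((m:ℝ) ^ 2 - n ^ 2) * (2 * c ^ 2 - 1) =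
      2 * ((m:ℝ)^2 + 2*m*n - ((m:ℝ)^2 - n^2) * c^2) by ring]
  rw [div_eq_div_iff hden.ne' (by positivity)]
  ring
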